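/- Fix i ∈ I, an integer k ≥ 1 and an integer s with 0 ≤ s ≤ k−1. Let m_P be the monomial with m_P(i,2t) = 1 for 0 ≤ t ≤ k−1 and m_P = 0 elsewhere, let v¹ : I × ℤ → ℕ be the indicator function of the set {(i,2t−1) : s+1 ≤ t ≤ k}, and set m = m_P − ∑_{t=s+1}^{k} A_{i,2t−1}. Let m' = m_{P'} = 𝟙_{(i,2k)} (so the corresponding v² is zero). Then d(m, m_P; m', m_{P'}) = 0 and d(m', m_{P'}; m, m_P) = 1. -/
import Mathlib


open Finsupp

/-- The exponent function of the monomial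
`A_{i,q^s} = Y_{i,q^{s+1}} Y_{i,q^{s-1}} ∏_{j ≠ i} Y_{j,q^s}^{C j i}`. -/
noncomputable def Amon {I : Type*} [Fintype I] [DecidableEq I]
    (C : I → I → ℤ) (i : I) (s : ℤ) : (I × ℤ) →₀ ℤ :=
  Finsupp.single (i, s + 1) 1 + Finsupp.single (i, s - 1) 1 +
    ∑ j ∈ Finset.univ.erase i, Finsupp.single (j, s) (C j i)

/-- `dd v1 mP1 m2 v2 = d(m¹, m_{P¹}; m², m_{P²})
  = ∑ (v¹(i,s+1)·m²(i,s) + m_{P¹}(i,s+1)·v²(i,s))`,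
where `m¹ = m_{P¹} - ∑ v¹(i,s)·A_{i,s}` and `m² = m_{P²} - ∑ v²(i,s)·A_{i,s}`. -/
noncomputable def dd {I : Type*} (v1 : (I × ℤ) →₀ ℕ) (mP1 m2 : (I × ℤ) →₀ ℤ)
    (v2 : (I × ℤ) →₀ ℕ) : ℤ :=
  ∑ᶠ p : I × ℤ, ((v1 (p.1, p.2 + 1) : ℤ) * m2 p + mP1 (p.1, p.2 + 1) * (v2 p : ℤ))

/-- For `0 ≤ s ≤ k-1`, `m_P = Y_{i,q^0} ⋯ Y_{i,q^{2k-2}}`,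
`m = m_P · ∏_{t=s+1}^{k} A_{i,q^{2t-1}}^{-1}` and `m' = m_{P'} = Y_{i,q^{2k}}`,
one has `d(m, m_P; m', m_{P'}) = 0` and `d(m', m_{P'}; m, m_P) = 1`. -/
theorem d_values {I : Type*} [Fintype I] [DecidableEq I]
    (C : I → I → ℤ)
    (hsym : ∀ i j, C i j = C j i)
    (hdiag : ∀ i, C i i = 2)
    (hoff : ∀ i j, i ≠ j → C i j = 0 ∨ C i j = -1)
    (i : I) (k s : ℤ) (hk : 1 ≤ k) (hs0 : 0 ≤ s) (hs : s ≤ k - 1)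
    (mP m mP' : (I × ℤ) →₀ ℤ) (v1 : (I × ℤ) →₀ ℕ)
    (hmP : mP = ∑ t ∈ Finset.Icc (0 : ℤ) (k - 1), Finsupp.single (i, 2 * t) 1)
    (hv1 : v1 = ∑ t ∈ Finset.Icc (s + 1) k, Finsupp.single (i, 2 * t - 1) (1 : ℕ))
    (hm : m = mP - ∑ t ∈ Finset.Icc (s + 1) k, Amon C i (2 * t - 1))
    (hmP' : mP' = Finsupp.single (i, 2 * k) 1) :
    dd v1 mP mP' 0 = 0 ∧ dd 0 mP' m v1 = 1 := by
  constructor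
  · -- first sum: pointwise zero
    have hz : ∀ p : I × ℤ,
        ((v1 (p.1, p.2 + 1) : ℤ) * mP' p
          + mP (p.1, p.2 + 1) * (((0 : (I × ℤ) →₀ ℕ)) p : ℤ)) = 0 := by
      intro p
      simp only [Finsupp.coe_zero, Pi.zero_apply, Nat.cast_zero, mul_zero, add_zero]
      rcases eq_or_ne p (i, 2 * k) with h | h
      · subst h
        have hv : v1 (i, 2 * k + 1) = 0 := by
          rw [hv1, Finsupp.finset_sum_apply]
          apply Finset.sum_eq_zero
          intro t ht
          simp only [Finset.mem_Icc] at ht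
          rw [Finsupp.single_apply, if_neg]
          intro hc
          have : 2 * t - 1 = 2 * k + 1 := congrArg Prod.snd hc
          omega
        simp [hv]
      · have : mP' p = 0 := by
          rw [hmP', Finsupp.single_apply, if_neg (Ne.symm h)]
        simp [this]
    have := finsum_congr hz
    unfold dd
    rw [this, finsum_zero]
  · unfold dd
    rw [finsum_eq_single _ ((i, 2 * k - 1) : I × ℤ)]
    · have h1 : mP' (i, 2 * k) = 1 := by
        rw [hmP', Finsupp.single_apply, if_pos rfl]
      have h1' : mP' (i, 2 * k - 1 + 1) = 1 := by
        rw [show (2 * k - 1 + 1) = 2 * k by ring]; exact h1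
      have h2 : v1 (i, 2 * k - 1) = 1 := by
        rw [hv1, Finsupp.finset_sum_apply]
        rw [Finset.sum_eq_single_of_mem k (by simp [Finset.mem_Icc]; omega)]
        · rw [Finsupp.single_apply, if_pos rfl]
        · intro t ht hne
          simp only [Finset.mem_Icc] at ht
          rw [Finsupp.single_apply, if_neg]
          intro hc
          have : 2 * t - 1 = 2 * k - 1 := congrArg Prod.snd hc
          omega
      simp [h1, h1', h2]
    · intro q hq
      have : mP' (q.1, q.2 + 1) = 0 := by
        rw [hmP', Finsupp.single_apply, if_neg]
        intro hc
        apply hq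
        have h1 : i = q.1 := congrArg Prod.fst hc
        have h2 : 2 * k = q.2 + 1 := congrArg Prod.snd hc
        have hq1 : q.1 = i := h1.symm
        have hq2 : q.2 = 2 * k - 1 := by omega
        rw [Prod.ext_iff]
        exact ⟨hq1, hq2⟩
      simp [this]
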